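/- Let p be a prime and let A be an F-finite Noetherian integral domain of characteristic p. If A is strongly F-regular, then A is normal, i.e. A is integrally closed in its field of fractions. -/

import Mathlib

/-- `A` is strongly `F`-regular with respect to the prime `p`: for every
non-zerodivisor `c` there are `e ≥ 0` and an additive map `ψ : A → A` which is
`A`-linear for the `A`-action on the source restricted along the `e`-th Frobenius
power and splits `a ↦ c * a ^ p ^ e`. -/
def IsStronglyFRegular (p : ℕ) (A : Type*) [CommRing A] : Prop :=
  ∀ c : A, (∀ x : A, c * x = 0 → x = 0) →
    ∃ (e : ℕ) (ψ : A →+ A),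
      (∀ r x : A, ψ (r ^ p ^ e * x) = r * ψ x) ∧
      ∀ a : A, ψ (c * a ^ p ^ e) = a

/-- `A` is `F`-finite: the Frobenius endomorphism `a ↦ a ^ p` is a finite ring map. -/
def IsFFinite (p : ℕ) (A : Type*) [CommRing A] [ExpChar A p] : Prop :=
  (frobenius A p).Finite

/-- A strongly F-regular F-finite Noetherian domain of characteristic p is normal,
i.e. integrally closed in its field of fractions. -/
theorem stronglyFRegular_normal (p : ℕ) [Fact p.Prime] (A : Type*) [CommRing A] [IsDomain A]
    [CharP A p] [IsNoetherianRing A] (hFF : IsFFinite p A)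
    (hSFR : IsStronglyFRegular p A) :
    IsIntegrallyClosed A := by
  rw [isIntegrallyClosed_iff (FractionRing A)]
  set K := FractionRing A
  intro x hx
  -- common denominator for all elements of adjoin A {x}
  obtain ⟨s, hs⟩ := hx.fg_adjoin_singleton
  obtain ⟨d, hd⟩ := IsLocalization.exist_integer_multiples (nonZeroDivisors A) s id
  have hden : ∀ y ∈ Subalgebra.toSubmodule (Algebra.adjoin A {x}), ∃ t : A,
      algebraMap A K t = (d : A) • y := by
    intro y hy
    rw [← hs] at hy
    induction hy using Submodule.span_induction with
    | mem z hz =>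
        obtain ⟨t, ht⟩ := hd z hz
        exact ⟨t, by simpa using ht⟩
    | zero => exact ⟨0, by simp⟩
    | add y z _ _ hy hz =>
        obtain ⟨t1, h1⟩ := hy; obtain ⟨t2, h2⟩ := hz
        exact ⟨t1 + t2, by simp [h1, h2, smul_add]⟩
    | smul a y _ hy =>
        obtain ⟨t, h⟩ := hy
        exact ⟨a * t, by simp [h, smul_smul, mul_comm, Algebra.smul_def, mul_left_comm]; exact Or.inl (Or.inl rfl)⟩
  -- strong F-regularity with c = d
  have hdreg : ∀ z : A, (d : A) * z = 0 → z = 0 := fun z hz =>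
    (mul_eq_zero.mp hz).resolve_left (nonZeroDivisors.coe_ne_zero d)
  obtain ⟨e, ψ, hlin, hsplit⟩ := hSFR d hdreg
  -- x = a / b
  obtain ⟨⟨a, b⟩, hab⟩ := IsLocalization.mk'_surjective (nonZeroDivisors A) x
  have hxb : x * algebraMap A K b = algebraMap A K a := by
    rw [← hab, IsLocalization.mk'_spec]
  -- d • x^{p^e} is integral
  obtain ⟨t, ht⟩ := hden (x ^ p ^ e)
    (Subalgebra.pow_mem _ (Algebra.self_mem_adjoin_singleton A x) _)
  -- d * a^{p^e} = t * b^{p^e} in A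
  have key : (d : A) * a ^ p ^ e = (b : A) ^ p ^ e * t := by
    apply IsFractionRing.injective A K
    have : algebraMap A K ((d : A) * a ^ p ^ e)
        = ((d:A) • x ^ p ^ e) * (algebraMap A K b) ^ p ^ e := by
      rw [Algebra.smul_def]
      push_cast [map_mul, map_pow]
      rw [← hxb]; ring
    rw [this, ← ht]
    push_cast [map_mul, map_pow]
    ring
  have ha : a = (b : A) * ψ t := by
    have := hsplit a
    rw [key] at this
    rw [← this, hlin]
  refine ⟨ψ t, ?_⟩
  have : algebraMap A K a = algebraMap A K b * algebraMap A K (ψ t) := by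
    rw [← map_mul, ← ha]
  rw [← hxb] at this
  have hb0 : algebraMap A K (b : A) ≠ 0 :=
    IsFractionRing.to_map_ne_zero_of_mem_nonZeroDivisors b.prop
  rw [mul_comm (algebraMap A K (b:A))] at this
  exact (mul_right_cancel₀ hb0 this).symm
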